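/- Let K be a field, let V be an infinite-dimensional K-vector space, and let F : ℝ → Submodule(K, V) be a monotone family of subspaces (L ≤ L' implies F(L) ⊆ F(L')) such that ⋃_L F(L) = V, each F(L) is finite-dimensional, and F(L) = 0 for L ≤ 0. Let (σ_k)_{k=1,2,…} be a basis of V such that for every k ≥ 1, sInf { L | σ_k ∈ F(L) } = sInf { L | dim F(L) ≥ k }. Let σ = Σ_j a_j σ_j be a nonzero element of V (finite sum, a_j ∈ K), and let k be the largest index with a_k ≠ 0. Then sInf { L | σ ∈ F(L) } = sInf { L | dim F(L) ≥ k }. (In the ECH setting: if {σ_k} is an action-minimizing basis and σ = Σ a_j σ_j ≠ 0, then c_σ(Y,λ) = c̃_k(Y,λ) where k is the largest index with a_k ≠ 0.) -/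

import Mathlib

open Module Set

theorem amb_card_le {K V : Type*} [Field K] [AddCommGroup V] [Module K V]
    (W : Submodule K V) [FiniteDimensional K W] {n : ℕ} (v : Fin n → V)
    (hmem : ∀ i, v i ∈ W) (hv : LinearIndependent K v) :
    n ≤ Module.finrank K W := by
  have hu : LinearIndependent K (fun i => (⟨v i, hmem i⟩ : W)) :=
    LinearIndependent.of_comp W.subtype hv
  simpa using hu.fintype_card_le_finrank

/-- Lemma on action-minimizing bases, part (b): if `(σ_k)_{k ≥ 1}` is an
action-minimizing basis of `V` (so `sInf {L | σ_k ∈ F L} = sInf {L | dim F L ≥ k}`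
for all `k`), `σ = Σ_j a_j σ_j` is nonzero, and `k` is the largest index with
`a_k ≠ 0`, then `sInf {L | σ ∈ F L} = sInf {L | dim F L ≥ k}`. -/
theorem action_minimizing_basis_spectrum (K : Type*) [Field K] (V : Type*)
    [AddCommGroup V] [Module K V] (hV : ¬ FiniteDimensional K V)
    (F : ℝ → Submodule K V) (hmono : Monotone F)
    (hexh : ∀ v : V, ∃ L : ℝ, v ∈ F L)
    (hfin : ∀ L : ℝ, FiniteDimensional K (F L))
    (hzero : ∀ L : ℝ, L ≤ 0 → F L = ⊥)
    (b : Basis ℕ+ K V)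
    (hb : ∀ k : ℕ+,
      sInf {L : ℝ | b k ∈ F L} =
        sInf {L : ℝ | (k : ℕ) ≤ Module.finrank K (F L)})
    (σ : V) (hσ : σ ≠ 0) (k : ℕ+)
    (hk : b.repr σ k ≠ 0) (hk' : ∀ j : ℕ+, k < j → b.repr σ j = 0) :
    sInf {L : ℝ | σ ∈ F L} =
      sInf {L : ℝ | (k : ℕ) ≤ Module.finrank K (F L)} := by
  have hbddT : ∀ j : ℕ+, BddBelow {L : ℝ | (j : ℕ) ≤ Module.finrank K (F L)} := by
    intro j
    refine ⟨0, fun L hL => ?_⟩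
    by_contra h
    push_neg at h
    rw [Set.mem_setOf_eq, hzero L h.le, finrank_bot] at hL
    exact absurd (lt_of_lt_of_le j.2 hL) (lt_irrefl 0)
  have hbddS : ∀ v : V, v ≠ 0 → BddBelow {L : ℝ | v ∈ F L} := by
    intro v hv
    refine ⟨0, fun L hL => ?_⟩
    by_contra h
    push_neg at h
    rw [Set.mem_setOf_eq, hzero L h.le, Submodule.mem_bot] at hL
    exact hv hL
  -- core lemma
  have key : ∀ L : ℝ, σ ∈ F L → ∀ n : ℕ, n ≤ (k : ℕ) →
      ∀ L' : ℝ, L < L' → n ≤ Module.finrank K (F L') := by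
    intro L hL n
    induction n with
    | zero => exact fun _ L' _ => Nat.zero_le _
    | succ n ih =>
      intro hnk L' hLL'
      have hnk' : n ≤ (k : ℕ) := Nat.le_of_succ_le hnk
      have ih' := ih hnk'
      have hσL' : σ ∈ F L' := hmono hLL'.le hL
      have hmemj : ∀ j : ℕ+, (j : ℕ) ≤ n → b j ∈ F L' := by
        intro j hj
        have hTle : sInf {L₂ : ℝ | (j : ℕ) ≤ Module.finrank K (F L₂)} ≤ L := by
          apply le_of_forall_pos_le_add
          intro ε hε
          exact csInf_le (hbddT j) (le_trans hj (ih' (L + ε) (by linarith)))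
        have hSlt : sInf {L₂ : ℝ | b j ∈ F L₂} < L' := by
          rw [hb j]; exact lt_of_le_of_lt hTle hLL'
        obtain ⟨L'', hmem'', hlt''⟩ := exists_lt_of_csInf_lt (hexh (b j)) hSlt
        exact hmono hlt''.le hmem''
      -- build n+1 independent vectors in F L'
      set g : Fin n → ℕ+ := fun i => ⟨(i : ℕ) + 1, Nat.succ_pos _⟩ with hg
      have hginj : Function.Injective g := by
        intro i₁ i₂ h
        have h2 := congrArg (fun x : ℕ+ => (x : ℕ)) h
        simp only [hg, PNat.mk_coe] at h2
        exact Fin.ext (by omega)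
      set v : Fin (n + 1) → V := Fin.snoc (b ∘ g) σ with hv
      have hvmem : ∀ i, v i ∈ F L' := by
        intro i
        refine Fin.lastCases ?_ ?_ i
        · simpa [hv] using hσL'
        · intro i
          simp only [hv, Fin.snoc_castSucc, Function.comp_apply]
          exact hmemj (g i) i.isLt
      have hvind : LinearIndependent K v := by
        rw [hv, linearIndependent_fin_snoc]
        refine ⟨b.linearIndependent.comp g hginj, ?_⟩
        intro hsp
        have hker : Submodule.span K (Set.range (b ∘ g)) ≤ LinearMap.ker (b.coord k) := by
          rw [Submodule.span_le]
          rintro _ ⟨i, rfl⟩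
          have hne : g i ≠ k := by
            intro h
            have : (g i : ℕ) = (k : ℕ) := congrArg _ h
            simp only [hg, PNat.mk_coe] at this
            omega
          simp only [SetLike.mem_coe, LinearMap.mem_ker, Function.comp_apply,
            Basis.coord_apply, Basis.repr_self]
          exact Finsupp.single_eq_of_ne' hne
        have : b.repr σ k = 0 := by
          have := hker hsp
          simpa [Basis.coord_apply] using this
        exact hk this
      have := amb_card_le (K := K) (F L') v hvmem hvind
      exact this
  obtain ⟨L₀, hL₀⟩ := hexh σ
  have hTk_ne : {L : ℝ | (k : ℕ) ≤ Module.finrank K (F L)}.Nonempty :=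
    ⟨L₀ + 1, key L₀ hL₀ k le_rfl (L₀ + 1) (by linarith)⟩
  apply le_antisymm
  · apply le_of_forall_pos_le_add
    intro ε hε
    set M := sInf {L : ℝ | (k : ℕ) ≤ Module.finrank K (F L)} + ε with hM
    obtain ⟨L', hL'T, hL'lt⟩ := exists_lt_of_csInf_lt hTk_ne
      (show sInf {L : ℝ | (k : ℕ) ≤ Module.finrank K (F L)} < M by rw [hM]; linarith)
    have hjmem : ∀ j : ℕ+, (j : ℕ) ≤ (k : ℕ) → b j ∈ F M := by
      intro j hj
      have h1 : sInf {L₂ : ℝ | b j ∈ F L₂} < M := by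
        rw [hb j]
        exact lt_of_le_of_lt (csInf_le (hbddT j) (le_trans hj hL'T)) hL'lt
      obtain ⟨L'', hmem'', hlt''⟩ := exists_lt_of_csInf_lt (hexh (b j)) h1
      exact hmono hlt''.le hmem''
    have hσM : σ ∈ F M := by
      rw [← b.linearCombination_repr σ, Finsupp.linearCombination_apply, Finsupp.sum]
      apply Submodule.sum_mem
      intro j hj
      have hjk : (j : ℕ) ≤ (k : ℕ) := by
        by_contra h
        push_neg at h
        exact (Finsupp.mem_support_iff.mp hj) (hk' j (by exact_mod_cast h))
      exact Submodule.smul_mem _ _ (hjmem j hjk)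
    exact csInf_le (hbddS σ hσ) hσM
  · apply le_csInf (hexh σ)
    intro L hL
    apply le_of_forall_pos_le_add
    intro ε hε
    exact csInf_le (hbddT k) (key L hL k le_rfl (L + ε) (by linarith))
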